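/- In the q-shuffle algebra V, for k,ℓ ∈ ℕ: [W_{−k}, G_ℓ]_{q,⋆} = [W_{−ℓ}, G_k]_{q,⋆} and [G_k, W_{ℓ+1}]_{q,⋆} = [G_ℓ, W_{k+1}]_{q,⋆}, where [a,b]_{q,⋆} = q a⋆b − q⁻¹ b⋆a. -/

import Mathlib

noncomputable section

/-- Words in the letters `x` (= `false`) and `y` (= `true`). -/
abbrev Wd := List Bool

/-- The underlying vector space of the free algebra `F⟨x,y⟩`,
with the words as a basis. -/
abbrev V (F : Type*) [Field F] := Wd →₀ F

/-- The pairing `⟨u,v⟩` on letters: `2` if equal, `-2` if distinct. -/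
def pr (a b : Bool) : ℤ := if a = b then 2 else -2

/-- `⟨u₁,b⟩ + ⟨u₂,b⟩ + ⋯ + ⟨u_r,b⟩` for a word `u` and a letter `b`. -/
def wsum (u : Wd) (b : Bool) : ℤ := (u.map fun a => pr a b).sum

variable {F : Type*} [Field F]

/-- Left multiplication by a letter, in the free (concatenation) algebra. -/
def lmul (a : Bool) (f : V F) : V F := Finsupp.mapDomain (fun w => a :: w) f

/-- The `q`-shuffle product of two words (as an element of `V F`), defined by
Rosso's recursion
`u ⋆ v = u₁((u₂⋯u_r) ⋆ v) + q^{⟨u₁,v₁⟩+⋯+⟨u_r,v₁⟩} v₁(u ⋆ (v₂⋯v_s))`. -/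
def sh (q : F) : Wd → Wd → V F
  | [], v => Finsupp.single v 1
  | u@(_ :: _), [] => Finsupp.single u 1
  | a :: u', b :: v' =>
      lmul a (sh q u' (b :: v')) +
        q ^ wsum (a :: u') b • lmul b (sh q (a :: u') v')
  termination_by u v => u.length + v.length
  decreasing_by all_goals (simp only [List.length_cons]; omega)

/-- The `q`-shuffle product on `V F`, extended bilinearly from words. -/
def st (q : F) (f g : V F) : V F :=
  f.sum fun u cu => g.sum fun v cv => (cu * cv) • sh q u v

/-- The concatenation (free-algebra) product on `V F`. -/
def cm (f g : V F) : V F :=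
  f.sum fun u cu => g.sum fun v cv => Finsupp.single (u ++ v) (cu * cv)

/-- Powers with respect to the concatenation product. -/
def cpow (f : V F) : ℕ → V F
  | 0 => Finsupp.single [] 1
  | n + 1 => cm f (cpow f n)

/-- The alternating word `W_{-k} = xyx⋯x` of length `2k+1`. -/
def altX : ℕ → Wd
  | 0 => [false]
  | k + 1 => false :: true :: altX k

/-- The alternating word `W_{k+1} = yxy⋯y` of length `2k+1`. -/
def altY : ℕ → Wd
  | 0 => [true]
  | k + 1 => true :: false :: altY k

/-- The alternating word `G_k = (yx)^k`. -/
def gw : ℕ → Wd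
  | 0 => []
  | k + 1 => true :: false :: gw k

/-- The alternating word `G̃_k = (xy)^k`. -/
def gtw : ℕ → Wd
  | 0 => []
  | k + 1 => false :: true :: gtw k

/-- `W_{-k}` as an element of `V F`. -/
def Wm (F : Type*) [Field F] (k : ℕ) : V F := Finsupp.single (altX k) 1

/-- `W_{k+1}` as an element of `V F`. -/
def Wp (F : Type*) [Field F] (k : ℕ) : V F := Finsupp.single (altY k) 1

/-- `G_k` as an element of `V F`. -/
def Gn (F : Type*) [Field F] (k : ℕ) : V F := Finsupp.single (gw k) 1

/-- `G̃_k` as an element of `V F`. -/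
def Gt (F : Type*) [Field F] (k : ℕ) : V F := Finsupp.single (gtw k) 1

section basics
variable {F : Type*} [Field F] (q : F)

lemma sh_nil_left (v : Wd) : sh q [] v = Finsupp.single v 1 := by rw [sh]

lemma sh_nil_right (u : Wd) : sh q u [] = Finsupp.single u 1 := by
  cases u <;> rw [sh]

lemma sh_cons_cons (a b : Bool) (u v : Wd) :
    sh q (a :: u) (b :: v) =
      lmul a (sh q u (b :: v)) + q ^ wsum (a :: u) b • lmul b (sh q (a :: u) v) := by
  rw [sh]

lemma lmul_single (a : Bool) (w : Wd) (c : F) :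
    lmul a (Finsupp.single w c) = Finsupp.single (a :: w) c :=
  Finsupp.mapDomain_single

lemma lmul_add (a : Bool) (f g : V F) : lmul a (f + g) = lmul a f + lmul a g :=
  Finsupp.mapDomain_add

lemma lmul_smul (a : Bool) (c : F) (f : V F) : lmul a (c • f) = c • lmul a f :=
  Finsupp.mapDomain_smul c f

end basics

section words
lemma wsum_nil (b : Bool) : wsum [] b = 0 := rfl

lemma wsum_cons (a : Bool) (u : Wd) (b : Bool) :
    wsum (a :: u) b = pr a b + wsum u b := by
  simp [wsum]

lemma wsum_append (u : Wd) (t b : Bool) :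
    wsum (u ++ [t]) b = wsum u b + pr t b := by
  simp [wsum]

lemma wsum_reverse (u : Wd) (b : Bool) : wsum u.reverse b = wsum u b := by
  simp [wsum, List.sum_reverse]


@[simp] lemma pr_ff : pr false false = 2 := rfl
@[simp] lemma pr_tt : pr true true = 2 := rfl
@[simp] lemma pr_ft : pr false true = -2 := rfl
@[simp] lemma pr_tf : pr true false = -2 := rfl

lemma pr_comm (a b : Bool) : pr a b = pr b a := by cases a <;> cases b <;> rfl

lemma pr_not (a b : Bool) : pr (!a) (!b) = pr a b := by cases a <;> cases b <;> rfl

lemma wsum_map_not (u : Wd) (b : Bool) : wsum (u.map not) (!b) = wsum u b := by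
  induction u with
  | nil => rfl
  | cons a u ih => simp [wsum_cons, ih, pr_not]

lemma wsum_gw (n : ℕ) (b : Bool) : wsum (gw n) b = 0 := by
  induction n with
  | zero => rfl
  | succ n ih => cases b <;> simp [gw, wsum_cons, ih, pr]

lemma altX_eq (k : ℕ) : altX k = false :: gw k := by
  induction k with
  | zero => rfl
  | succ k ih => simp [altX, gw, ih]

lemma altY_eq (k : ℕ) : altY k = true :: gtw k := by
  induction k with
  | zero => rfl
  | succ k ih => simp [altY, gtw, ih]

lemma gtw_append (k : ℕ) : gtw k ++ [false, true] = gtw (k + 1) := by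
  induction k with
  | zero => rfl
  | succ k ih => simp [gtw] at ih ⊢; exact ih

lemma gw_append (k : ℕ) : gw k ++ [true, false] = gw (k + 1) := by
  induction k with
  | zero => rfl
  | succ k ih => simp [gw] at ih ⊢; exact ih

lemma gw_reverse (k : ℕ) : (gw k).reverse = gtw k := by
  induction k with
  | zero => rfl
  | succ k ih => simp [gw, ih]; exact gtw_append k

lemma gtw_reverse (k : ℕ) : (gtw k).reverse = gw k := by
  rw [← gw_reverse, List.reverse_reverse]

lemma gw_map_not (k : ℕ) : (gw k).map not = gtw k := by
  induction k with
  | zero => rfl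
  | succ k ih => simp [gw, gtw, ih]

lemma gtw_map_not (k : ℕ) : (gtw k).map not = gw k := by
  induction k with
  | zero => rfl
  | succ k ih => simp [gw, gtw, ih]

lemma gw_true (k : ℕ) : gw k ++ [true] = true :: gtw k := by
  induction k with
  | zero => rfl
  | succ k ih => simp [gw, gtw] at ih ⊢; exact ih

lemma altX_map_not (k : ℕ) : (altX k).map not = altY k := by
  rw [altX_eq, altY_eq]; simp [gw_map_not]

lemma altY_reverse (k : ℕ) : (altY k).reverse = altY k := by
  rw [altY_eq]; simp [gtw_reverse, gw_true, altY_eq]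

end words

section part1
variable {F : Type*} [Field F]

/-- `H(a,b) = C(a,b) + q² B(a,b)` in our notation. -/
noncomputable def Hh (q : F) (a b : ℕ) : V F :=
  sh q (gw a) (false :: gw b) + q ^ (2 : ℤ) • sh q (false :: gw a) (gw b)

variable (q : F)

lemma recB (a b : ℕ) :
    sh q (false :: gw a) (gw (b + 1)) =
      lmul false (sh q (gw a) (gw (b + 1))) +
        q ^ (-2 : ℤ) • lmul true (lmul false (Hh q a b)) := by
  show sh q (false :: gw a) (true :: false :: gw b) = _
  rw [sh_cons_cons, sh_cons_cons]
  simp [Hh, lmul_add, lmul_smul, wsum_cons, wsum_gw, smul_smul, smul_add]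
  rfl

lemma recC (a b : ℕ) :
    sh q (gw (a + 1)) (false :: gw b) =
      lmul false (sh q (gw (a + 1)) (gw b)) + lmul true (lmul false (Hh q a b)) := by
  show sh q (true :: false :: gw a) (false :: gw b) = _
  rw [sh_cons_cons, sh_cons_cons]
  simp [Hh, lmul_add, lmul_smul, wsum_cons, wsum_gw, smul_smul, smul_add]
  rw [show (true :: false :: gw a : Wd) = gw (a + 1) from rfl]
  abel

lemma recA (k l : ℕ) :
    sh q (gw (k + 1)) (gw (l + 1)) =
      lmul true (sh q (false :: gw k) (gw (l + 1)) + sh q (gw (k + 1)) (false :: gw l)) := by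
  conv_lhs => rw [show gw (k+1) = true :: false :: gw k from rfl,
    show gw (l+1) = true :: false :: gw l from rfl, sh_cons_cons]
  simp [lmul_add, wsum_cons, wsum_gw]
  rfl

lemma recH (hq : q ≠ 0) (a b : ℕ) :
    Hh q (a + 1) (b + 1) =
      (1 + q ^ (2 : ℤ)) • lmul false (sh q (gw (a + 1)) (gw (b + 1))) +
        lmul true (lmul false (Hh q a (b + 1) + Hh q (a + 1) b)) := by
  rw [Hh, recB q (a+1) b, recC q a (b+1), lmul_add, lmul_add, smul_add, smul_smul,
    ← zpow_add₀ hq]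
  norm_num
  module

end part1

section part1b
variable {F : Type*} [Field F] (q : F)


lemma zpow_two' (q : F) : q ^ (2 : ℤ) = q ^ (2 : ℕ) := by
  rw [show (2:ℤ) = ((2:ℕ):ℤ) by norm_num, zpow_natCast]

lemma zpow_neg_two' (q : F) (hq : q ≠ 0) : q ^ (-2 : ℤ) = (q ^ (2 : ℕ))⁻¹ := by
  rw [show (-2:ℤ) = -((2:ℕ):ℤ) by norm_num, zpow_neg, zpow_natCast]

lemma L1x (hq : q ≠ 0) (b : ℕ) :
    q ^ (2 : ℤ) • sh q [false] (gw b) + Finsupp.single (false :: gw b) (1 : F) =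
      sh q (gw b) [false] + q ^ (2 : ℤ) • Finsupp.single (false :: gw b) (1 : F) := by
  induction b with
  | zero =>
      simp only [gw, sh_nil_left, sh_nil_right]
      abel
  | succ b ih =>
      have h2 : q ^ (-2 : ℤ) * q ^ (2 : ℤ) = 1 := by
        rw [← zpow_add₀ hq]; norm_num
      have ihl := congrArg (fun z => lmul true (lmul false z)) ih
      simp only [lmul_add, lmul_smul, lmul_single, zpow_two'] at ihl
      rw [show gw (b + 1) = true :: false :: gw b from rfl]
      rw [sh_cons_cons q false true [] (false :: gw b),
        sh_cons_cons q false false [] (gw b),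
        sh_cons_cons q true false (false :: gw b) [],
        sh_cons_cons q false false (gw b) []]
      simp only [sh_nil_left, sh_nil_right, lmul_add, lmul_smul, lmul_single,
        wsum_cons, wsum_gw, wsum_nil, smul_add, smul_smul, pr_ff, pr_tt, pr_ft, pr_tf, add_zero, Int.reduceAdd, Int.reduceNeg, zpow_zero, one_smul,
        zpow_two', zpow_neg_two' q hq]
      have ihl' := eq_sub_of_add_eq ihl.symm
      rw [ihl']
      match_scalars <;> (field_simp; try ring1)
end part1b

section part1c
variable {F : Type*} [Field F] (q : F)

lemma baseH (hq : q ≠ 0) (b : ℕ) : Hh q 0 b = Hh q b 0 := by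
  have h := L1x q hq b
  unfold Hh
  rw [show gw 0 = ([] : Wd) from rfl, sh_nil_left, sh_nil_right, add_comm]
  exact h

lemma AH_symm (hq : q ≠ 0) : ∀ n k l, k + l ≤ n →
    sh q (gw k) (gw l) = sh q (gw l) (gw k) ∧ Hh q k l = Hh q l k := by
  intro n
  induction n with
  | zero =>
      intro k l h
      obtain ⟨rfl, rfl⟩ : k = 0 ∧ l = 0 := by omega
      exact ⟨rfl, rfl⟩
  | succ n ihn =>
      have Asym : ∀ k l, k + l ≤ n + 1 → sh q (gw k) (gw l) = sh q (gw l) (gw k) := by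
        intro k l hkl
        match k, l with
        | 0, l => rw [show gw 0 = ([] : Wd) from rfl, sh_nil_left, sh_nil_right]
        | k+1, 0 => rw [show gw 0 = ([] : Wd) from rfl, sh_nil_left, sh_nil_right]
        | k+1, l+1 =>
            rw [recA, recA, recB, recB, recC, recC,
              (ihn k (l+1) (by omega)).1, (ihn (k+1) l (by omega)).1,
              (ihn k l (by omega)).2]
            refine congrArg _ ?_
            abel
      have Hsym : ∀ k l, k + l ≤ n + 1 → Hh q k l = Hh q l k := by
        intro k l hkl
        match k, l with
        | 0, l => exact baseH q hq l
        | k+1, 0 => exact (baseH q hq (k+1)).symm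
        | k+1, l+1 =>
            rw [recH q hq, recH q hq, Asym (k+1) (l+1) (by omega),
              (ihn k (l+1) (by omega)).2, (ihn (k+1) l (by omega)).2]
            refine congrArg₂ _ rfl (congrArg _ (congrArg _ ?_))
            abel
      exact fun k l h => ⟨Asym k l h, Hsym k l h⟩

lemma part1core (hq : q ≠ 0) (k l : ℕ) :
    q • sh q (false :: gw k) (gw l) - q⁻¹ • sh q (gw l) (false :: gw k)
      = (q - q⁻¹) • lmul false (sh q (gw k) (gw l)) := by
  cases l with
  | zero =>
      simp [gw, sh_nil_left, sh_nil_right, lmul_single, sub_smul]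
  | succ l =>
      have hA := (AH_symm q hq ((l+1) + k) (l+1) k le_rfl).1
      have hH := (AH_symm q hq (l + k) l k le_rfl).2
      rw [recB q k l, recC q l k, hA, hH]
      match_scalars <;> (try simp only [zpow_neg_two' q hq]) <;> (try ring1) <;> (field_simp; try ring1)

lemma st_single (u v : Wd) :
    st q (Finsupp.single u (1 : F)) (Finsupp.single v 1) = sh q u v := by
  rw [st, Finsupp.sum_single_index, Finsupp.sum_single_index] <;>
    simp

lemma part1 (hq : q ≠ 0) (k l : ℕ) :
    q • st q (Wm F k) (Gn F l) - q⁻¹ • st q (Gn F l) (Wm F k)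
      = q • st q (Wm F l) (Gn F k) - q⁻¹ • st q (Gn F k) (Wm F l) := by
  rw [Wm, Wm, Gn, Gn, st_single, st_single, st_single, st_single, altX_eq, altX_eq,
    part1core q hq k l, part1core q hq l k,
    (AH_symm q hq (k + l) k l le_rfl).1]

end part1c

section part2a
variable {F : Type*} [Field F]

/-- Right multiplication by a letter. -/
noncomputable def rmul (c : Bool) (f : V F) : V F :=
  Finsupp.mapDomain (fun w => w ++ [c]) f

lemma rmul_single (c : Bool) (w : Wd) (x : F) :
    rmul c (Finsupp.single w x) = Finsupp.single (w ++ [c]) x :=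
  Finsupp.mapDomain_single

lemma rmul_add (c : Bool) (f g : V F) : rmul c (f + g) = rmul c f + rmul c g :=
  Finsupp.mapDomain_add

lemma rmul_smul (c : Bool) (x : F) (f : V F) : rmul c (x • f) = x • rmul c f :=
  Finsupp.mapDomain_smul x f

lemma lmul_rmul (a c : Bool) (f : V F) : lmul a (rmul c f) = rmul c (lmul a f) := by
  simp only [lmul, rmul, ← Finsupp.mapDomain_comp]
  rfl

variable (q : F)

lemma sh_app (hq : q ≠ 0) : ∀ (u v : Wd) (a b : Bool),
    sh q (u ++ [a]) (v ++ [b]) =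
      rmul b (sh q (u ++ [a]) v) + q ^ wsum (v ++ [b]) a • rmul a (sh q u (v ++ [b]))
  | [], [], a, b => by
      simp only [List.nil_append, sh_cons_cons, sh_nil_left, sh_nil_right, lmul_single,
        rmul_single, wsum_cons, wsum_nil, add_zero, List.singleton_append]
      rw [pr_comm b a]
  | [], d :: w, a, b => by
      have IH := sh_app hq [] w a b
      simp only [List.nil_append] at IH
      simp only [List.nil_append, List.cons_append, sh_cons_cons, sh_nil_left, IH,
        lmul_add, lmul_smul, rmul_add, rmul_smul, lmul_single, rmul_single, lmul_rmul,
        wsum_cons, wsum_nil, wsum_append, add_zero, zpow_add₀ hq, smul_smul, smul_add]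
      rw [pr_comm d a, pr_comm b a]
      match_scalars <;> ring1
  | c :: m, [], a, b => by
      have IH := sh_app hq m [] a b
      simp only [List.nil_append] at IH
      simp only [List.nil_append, List.cons_append, sh_cons_cons, sh_nil_left, sh_nil_right, IH,
        lmul_add, lmul_smul, rmul_add, rmul_smul, lmul_single, rmul_single, lmul_rmul,
        wsum_cons, wsum_nil, wsum_append, add_zero, zpow_add₀ hq, smul_smul, smul_add]
      rw [pr_comm b a]
      match_scalars <;> ring1
  | c :: m, d :: w, a, b => by
      have IH1 := sh_app hq m (d :: w) a b
      have IH2 := sh_app hq (c :: m) w a b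
      simp only [List.cons_append] at IH1 IH2 ⊢
      rw [sh_cons_cons q c d (m ++ [a]) (w ++ [b]), IH1, IH2,
        sh_cons_cons q c d (m ++ [a]) w, sh_cons_cons q c d m (w ++ [b])]
      simp only [lmul_add, lmul_smul, rmul_add, rmul_smul, lmul_rmul, wsum_cons,
        wsum_append, zpow_add₀ hq, smul_smul, smul_add]
      rw [pr_comm d a, pr_comm b a]
      match_scalars <;> ring1
  termination_by u v => u.length + v.length

end part2a

section part2b
variable {F : Type*} [Field F]

lemma rev_lmul (a : Bool) (f : V F) :
    Finsupp.mapDomain List.reverse (lmul a f) =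
      rmul a (Finsupp.mapDomain List.reverse f) := by
  have h : (List.reverse ∘ fun w : Wd => a :: w) =
      (fun w : Wd => w ++ [a]) ∘ List.reverse := by
    funext w; simp
  rw [lmul, rmul, ← Finsupp.mapDomain_comp, h, Finsupp.mapDomain_comp]

lemma not_lmul (a : Bool) (f : V F) :
    Finsupp.mapDomain (List.map not) (lmul a f) =
      lmul (!a) (Finsupp.mapDomain (List.map not) f) := by
  rw [lmul, lmul, ← Finsupp.mapDomain_comp, ← Finsupp.mapDomain_comp]
  rfl

variable (q : F)

lemma sh_rev (hq : q ≠ 0) : ∀ (u v : Wd),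
    Finsupp.mapDomain List.reverse (sh q u v) = sh q v.reverse u.reverse
  | [], v => by
      simp [sh_nil_left, sh_nil_right, Finsupp.mapDomain_single]
  | c :: m, [] => by
      simp [sh_nil_left, sh_nil_right, Finsupp.mapDomain_single]
  | c :: m, d :: w => by
      have IH1 := sh_rev hq m (d :: w)
      have IH2 := sh_rev hq (c :: m) w
      rw [sh_cons_cons, Finsupp.mapDomain_add, Finsupp.mapDomain_smul, rev_lmul, rev_lmul,
        IH1, IH2, @List.reverse_cons _ d w, @List.reverse_cons _ c m,
        sh_app q hq w.reverse m.reverse d c]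
      simp only [wsum_cons, wsum_append, wsum_reverse, zpow_add₀ hq, smul_smul]
      match_scalars <;> ring1
  termination_by u v => u.length + v.length

lemma sh_not : ∀ (u v : Wd),
    Finsupp.mapDomain (List.map not) (sh q u v) = sh q (u.map not) (v.map not)
  | [], v => by
      simp [sh_nil_left, Finsupp.mapDomain_single]
  | c :: m, [] => by
      simp [sh_nil_left, sh_nil_right, Finsupp.mapDomain_single]
  | c :: m, d :: w => by
      have IH1 := sh_not m (d :: w)
      have IH2 := sh_not (c :: m) w
      rw [sh_cons_cons, Finsupp.mapDomain_add, Finsupp.mapDomain_smul, not_lmul, not_lmul,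
        IH1, IH2, List.map_cons, List.map_cons, sh_cons_cons]
      simp only [← List.map_cons, wsum_map_not]
  termination_by u v => u.length + v.length

end part2b

section final
variable {F : Type*} [Field F] (q : F)

lemma part1sh (hq : q ≠ 0) (k l : ℕ) :
    q • sh q (altX k) (gw l) - q⁻¹ • sh q (gw l) (altX k)
      = q • sh q (altX l) (gw k) - q⁻¹ • sh q (gw k) (altX l) := by
  rw [altX_eq, altX_eq, part1core q hq k l, part1core q hq l k,
    (AH_symm q hq (k + l) k l le_rfl).1]

lemma tau_sh (hq : q ≠ 0) (u v : Wd) :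
    Finsupp.mapDomain List.reverse (Finsupp.mapDomain (List.map not) (sh q u v))
      = sh q ((v.map not).reverse) ((u.map not).reverse) := by
  rw [sh_not, sh_rev q hq]

lemma tau_gw (k : ℕ) : ((gw k).map not).reverse = gw k := by
  rw [gw_map_not, gtw_reverse]

lemma tau_altX (k : ℕ) : ((altX k).map not).reverse = altY k := by
  rw [altX_map_not, altY_reverse]

lemma mapDomain_sub' (g : Wd → Wd) (f h : V F) :
    Finsupp.mapDomain g (f - h) = Finsupp.mapDomain g f - Finsupp.mapDomain g h :=
  map_sub (Finsupp.mapDomain.addMonoidHom g) f h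

lemma part2sh (hq : q ≠ 0) (k l : ℕ) :
    q • sh q (gw k) (altY l) - q⁻¹ • sh q (altY l) (gw k)
      = q • sh q (gw l) (altY k) - q⁻¹ • sh q (altY k) (gw l) := by
  have key := congrArg
    (fun f => Finsupp.mapDomain List.reverse (Finsupp.mapDomain (List.map not) f))
    (part1sh q hq l k)
  simpa only [mapDomain_sub', Finsupp.mapDomain_smul, tau_sh q hq,
    tau_gw, tau_altX] using key

theorem stmt_13' (hq : q ≠ 0) (k l : ℕ) :
    q • st q (Wm F k) (Gn F l) - q⁻¹ • st q (Gn F l) (Wm F k)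
        = q • st q (Wm F l) (Gn F k) - q⁻¹ • st q (Gn F k) (Wm F l) ∧
    q • st q (Gn F k) (Wp F l) - q⁻¹ • st q (Wp F l) (Gn F k)
        = q • st q (Gn F l) (Wp F k) - q⁻¹ • st q (Wp F k) (Gn F l) := by
  constructor
  · rw [Wm, Wm, Gn, Gn, st_single, st_single, st_single, st_single]
    exact part1sh q hq k l
  · rw [Wp, Wp, Gn, Gn, st_single, st_single, st_single, st_single]
    exact part2sh q hq k l

end final

/-- `[W_{−k}, G_ℓ]_q = [W_{−ℓ}, G_k]_q` and `[G_k, W_{ℓ+1}]_q = [G_ℓ, W_{k+1}]_q`. -/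
theorem stmt_13 {F : Type*} [Field F] (q : F) (hq : q ≠ 0)
    (hq' : ∀ n : ℕ, 0 < n → q ^ n ≠ 1) (k l : ℕ) :
    q • st q (Wm F k) (Gn F l) - q⁻¹ • st q (Gn F l) (Wm F k)
        = q • st q (Wm F l) (Gn F k) - q⁻¹ • st q (Gn F k) (Wm F l) ∧
    q • st q (Gn F k) (Wp F l) - q⁻¹ • st q (Wp F l) (Gn F k)
        = q • st q (Gn F l) (Wp F k) - q⁻¹ • st q (Wp F k) (Gn F l) :=
  stmt_13' q hq k l
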